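/- arXiv:1907.02119 — 15 statements merged into one kernel-verified Lean document; each statement's English description precedes it below -/
import Mathlib

section
/- Let M be a right R-module and m1, m2 ∈ M with m1 regular. Then m1 ≤⁻ m2 if and only if there exist an idempotent f ∈ S and an idempotent a ∈ R such that l_S(m1) = l_S(f), r_R(m1) = r_R(a), f(m1) = f(m2), and m1·a = m2·a. -/
/- A right `R`-module is encoded as a left `Rᵐᵒᵖ`-module: `m · r = MulOpposite.op r • m`.
Likewise `R` itself is a right `R`-module via `op r • a = a * r`, so the dual
`M* = Hom_R(M, R)` is `M →ₗ[Rᵐᵒᵖ] R` and `S = End_R(M)` is `Module.End Rᵐᵒᵖ M`. -/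

open MulOpposite

/-- The minus relation `m₁ ≤⁻ m₂` on a right `R`-module `M`: there exists `φ ∈ M*`
with `m₁ = m₁·φ(m₁)`, `m₁·φ(x) = m₂·φ(x)` for all `x ∈ M`, and `φ(m₁) = φ(m₂)`. -/
def MinusLE (R : Type*) [Ring R] {M : Type*} [AddCommGroup M] [Module Rᵐᵒᵖ M]
    (m₁ m₂ : M) : Prop :=
  ∃ φ : M →ₗ[Rᵐᵒᵖ] R,
    m₁ = op (φ m₁) • m₁ ∧ (∀ x : M, op (φ x) • m₁ = op (φ x) • m₂) ∧ φ m₁ = φ m₂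

/-- An element `m` of a right `R`-module is (Zelmanowitz) regular if `m = m·φ(m)`
for some `φ ∈ M*`. -/
def IsRegularElem (R : Type*) [Ring R] {M : Type*} [AddCommGroup M] [Module Rᵐᵒᵖ M]
    (m : M) : Prop :=
  ∃ φ : M →ₗ[Rᵐᵒᵖ] R, m = op (φ m) • m

private lemma op_smul_aux {R : Type*} [Ring R] {M : Type*} [AddCommGroup M] [Module Rᵐᵒᵖ M]
    (r : Rᵐᵒᵖ) (b : R) (m : M) : op (r • b) • m = r • (op b • m) := by
  rw [← op_unop r, op_smul_eq_mul, op_mul, op_unop, mul_smul]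

/-- For `m₁` regular, `m₁ ≤⁻ m₂` iff there are idempotents `f ∈ S`,
`a ∈ R` with `l_S(m₁) = l_S(f)`, `r_R(m₁) = r_R(a)`, `f(m₁) = f(m₂)`, `m₁·a = m₂·a`. -/
theorem minusLE_iff_exists_idempotents (R : Type*) [Ring R] {M : Type*} [AddCommGroup M]
    [Module Rᵐᵒᵖ M] (m₁ m₂ : M) (hreg : IsRegularElem R m₁) :
    MinusLE R m₁ m₂ ↔
      ∃ (f : Module.End Rᵐᵒᵖ M) (a : R), f * f = f ∧ a * a = a ∧
        {g : Module.End Rᵐᵒᵖ M | g m₁ = 0} = {g : Module.End Rᵐᵒᵖ M | g * f = 0} ∧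
        {r : R | op r • m₁ = (0 : M)} = {x : R | a * x = 0} ∧
        f m₁ = f m₂ ∧ op a • m₁ = op a • m₂ := by
  constructor
  · rintro ⟨φ, h1, h2, h3⟩
    refine ⟨{ toFun := fun x => op (φ x) • m₁,
              map_add' := fun x y => by simp [add_smul],
              map_smul' := fun r x => by
                simp only [map_smul, RingHom.id_apply]
                exact op_smul_aux r (φ x) m₁ }, φ m₁, ?_, ?_, ?_, ?_, ?_, ?_⟩
    · ext x
      show op (φ (op (φ x) • m₁)) • m₁ = op (φ x) • m₁
      rw [map_smul, op_smul_aux, ← h1]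
    · conv_rhs => rw [h1]
      rw [map_smul, op_smul_eq_mul]
    · ext g
      simp only [Set.mem_setOf_eq]
      constructor
      · intro hg
        ext x
        show g (op (φ x) • m₁) = 0
        rw [map_smul, hg, smul_zero]
      · intro hg
        have := DFunLike.congr_fun hg m₁
        simpa [← h1] using this
    · ext r
      simp only [Set.mem_setOf_eq]
      constructor
      · intro hr
        rw [← op_smul_eq_mul, ← map_smul, hr, map_zero]
      · intro hr
        conv_lhs => rw [h1]
        rw [smul_smul, ← op_mul, hr]
        simp
    · show op (φ m₁) • m₁ = op (φ m₂) • m₁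
      rw [h3]
    · exact h2 m₁
  · rintro ⟨f, a, hf, ha, hlS, hrR, hfm, ham⟩
    obtain ⟨ψ, hψ⟩ := hreg
    have hfm₁ : f m₁ = m₁ := by
      have h0 : (1 - f) ∈ {g : Module.End Rᵐᵒᵖ M | g * f = 0} := by
        show (1 - f) * f = 0
        rw [sub_mul, one_mul, hf, sub_self]
      rw [← hlS] at h0
      have : m₁ - f m₁ = 0 := h0
      rw [sub_eq_zero] at this
      exact this.symm
    have ham₁ : op a • m₁ = m₁ := by
      have h0 : (1 - a) ∈ {x : R | a * x = 0} := by
        show a * (1 - a) = 0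
        rw [mul_sub, mul_one, ha, sub_self]
      rw [← hrR] at h0
      have h0' : op (1 - a) • m₁ = 0 := h0
      rw [op_sub, sub_smul, op_one, one_smul, sub_eq_zero] at h0'
      exact h0'.symm
    refine ⟨{ toFun := fun x => a * ψ (f x),
              map_add' := fun x y => by simp [mul_add],
              map_smul' := fun r x => by
                simp only [map_smul, RingHom.id_apply]
                rw [← op_unop r, op_smul_eq_mul, op_smul_eq_mul, mul_assoc] },
            ?_, ?_, ?_⟩
    · show m₁ = op (a * ψ (f m₁)) • m₁
      rw [hfm₁, op_mul, mul_smul, ham₁]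
      exact hψ
    · intro x
      show op (a * ψ (f x)) • m₁ = op (a * ψ (f x)) • m₂
      rw [op_mul, mul_smul, mul_smul, ham]
    · show a * ψ (f m₁) = a * ψ (f m₂)
      rw [hfm]
end

section
/- Let M be a regular right R-module. Then the minus relation ≤⁻ is a partial order on M: it is reflexive, antisymmetric, and transitive. -/
/- A right `R`-module is encoded as a left `Rᵐᵒᵖ`-module: `m · r = MulOpposite.op r • m`.
Likewise `R` itself is a right `R`-module via `op r • a = a * r`, so the dual
`M* = Hom_R(M, R)` is `M →ₗ[Rᵐᵒᵖ] R` and `S = End_R(M)` is `Module.End Rᵐᵒᵖ M`. -/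

open MulOpposite

/-- On a regular module, the minus relation is a partial order
(reflexive, antisymmetric, and transitive). -/
theorem minusLE_isPartialOrder (R : Type*) [Ring R] {M : Type*} [AddCommGroup M]
    [Module Rᵐᵒᵖ M] (hM : ∀ m : M, IsRegularElem R m) :
    (∀ m : M, MinusLE R m m) ∧
    (∀ m₁ m₂ : M, MinusLE R m₁ m₂ → MinusLE R m₂ m₁ → m₁ = m₂) ∧
    (∀ m₁ m₂ m₃ : M, MinusLE R m₁ m₂ → MinusLE R m₂ m₃ → MinusLE R m₁ m₃) := by
  refine ⟨?_, ?_, ?_⟩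
  · -- reflexivity
    intro m
    obtain ⟨φ, hφ⟩ := hM m
    exact ⟨φ, hφ, fun x => rfl, rfl⟩
  · -- antisymmetry
    rintro m₁ m₂ ⟨φ, h1, h2, h3⟩ ⟨ψ, k1, k2, k3⟩
    -- A : m₁ = m₂ · φ(m₂)
    have A : m₁ = op (φ m₂) • m₂ := by rw [← h3, ← h2 m₁, ← h1]
    -- B : m₂ = m₁ · ψ(m₂)
    have B : m₂ = op (ψ m₂) • m₁ := by rw [← k2 m₂, ← k1]
    -- E : ψ(m₂) = ψ(m₂) * φ(m₂)
    have E : ψ m₂ = ψ m₂ * φ m₂ := by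
      have h := congrArg ψ A
      rw [map_smul, op_smul_eq_mul] at h
      exact k3.trans h
    symm
    calc m₂ = op (ψ m₂) • m₁ := B
      _ = op (ψ m₂ * φ m₂) • m₁ := by rw [← E]
      _ = op (φ m₂) • (op (ψ m₂) • m₁) := by rw [op_mul, mul_smul]
      _ = op (φ m₂) • m₂ := by rw [← B]
      _ = m₁ := A.symm
  · -- transitivity
    rintro m₁ m₂ m₃ ⟨φ, h1, h2, h3⟩ ⟨ψ, k1, k2, k3⟩
    -- A : m₁ = m₁ · φ(m₂)
    have A : m₁ = op (φ m₂) • m₁ := by rw [← h3, ← h1]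
    -- B : m₁ = m₂ · φ(m₁)
    have B : m₁ = op (φ m₁) • m₂ := by rw [← h2 m₁]; exact h1
    -- E : ψ(m₁) = ψ(m₂) * φ(m₁)
    have E : ψ m₁ = ψ m₂ * φ m₁ := by
      have h := congrArg ψ B
      rwa [map_smul, op_smul_eq_mul] at h
    -- C : m₂ · ψ(m₁) = m₁
    have C : op (ψ m₁) • m₂ = m₁ := by
      rw [E, op_mul, mul_smul, ← k1, ← h2 m₁, ← h1]
    -- F : φ(m₂) * ψ(m₁) = φ(m₁)
    have F : φ m₂ * ψ m₁ = φ m₁ := by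
      have h := congrArg φ C
      rwa [map_smul, op_smul_eq_mul] at h
    -- D : m₁ · ψ(m₁) = m₁
    have D : op (ψ m₁) • m₁ = m₁ := by
      nth_rewrite 2 [A]
      rw [← mul_smul, ← op_mul, F]
      exact h1.symm
    -- F2 : φ(m₂) * ψ(m₂) = φ(m₂)
    have F2 : φ m₂ * ψ m₂ = φ m₂ := by
      have h := congrArg φ k1
      rw [map_smul, op_smul_eq_mul] at h
      exact h.symm
    -- G : m₁ · ψ(m₂) = m₁
    have G : op (ψ m₂) • m₁ = m₁ := by
      nth_rewrite 1 [A]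
      rw [← mul_smul, ← op_mul, F2, ← A]
    -- H1 : ψ(m₁) * ψ(m₁) = ψ(m₁)
    have H1 : ψ m₁ * ψ m₁ = ψ m₁ := by
      have h := congrArg ψ D
      rwa [map_smul, op_smul_eq_mul] at h
    -- H2 : ψ(m₁) * ψ(m₂) = ψ(m₁)
    have H2 : ψ m₁ * ψ m₂ = ψ m₁ := by
      have h := congrArg ψ G
      rwa [map_smul, op_smul_eq_mul] at h
    -- the witness : θ(x) = ψ(m₁) * ψ(x)
    refine ⟨{ toFun := fun x => ψ m₁ * ψ x,
              map_add' := fun x y => by simp only [map_add, mul_add],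
              map_smul' := fun r x => by
                simp only [map_smul, MulOpposite.smul_eq_mul_unop, RingHom.id_apply, mul_assoc]
            }, ?_, ?_, ?_⟩
    · show m₁ = op (ψ m₁ * ψ m₁) • m₁
      rw [H1]
      exact D.symm
    · intro x
      show op (ψ m₁ * ψ x) • m₁ = op (ψ m₁ * ψ x) • m₃
      simp only [op_mul, mul_smul]
      rw [D, ← k2 m₁, C]
    · show ψ m₁ * ψ m₁ = ψ m₁ * ψ m₃
      rw [H1, ← k3, H2]
end

section
/- Let M be a regular right R-module and suppose m1 ≤⁻ m2 and m2 ≤⁻ m1 for m1, m2 ∈ M. Then m1 = m2. -/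
/- A right `R`-module is encoded as a left `Rᵐᵒᵖ`-module: `m · r = MulOpposite.op r • m`.
Likewise `R` itself is a right `R`-module via `op r • a = a * r`, so the dual
`M* = Hom_R(M, R)` is `M →ₗ[Rᵐᵒᵖ] R` and `S = End_R(M)` is `Module.End Rᵐᵒᵖ M`. -/

open MulOpposite

/-- On a regular module, the minus relation is antisymmetric. -/
theorem minusLE_antisymm (R : Type*) [Ring R] {M : Type*} [AddCommGroup M]
    [Module Rᵐᵒᵖ M] (hM : ∀ m : M, IsRegularElem R m) (m₁ m₂ : M)
    (h₁ : MinusLE R m₁ m₂) (h₂ : MinusLE R m₂ m₁) : m₁ = m₂ := by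
  obtain ⟨φ, hφ1, hφ2, hφ3⟩ := h₁
  obtain ⟨ψ, hψ1, hψ2, hψ3⟩ := h₂
  have hm1 : m₁ = op (φ m₁) • m₂ := hφ1.trans (hφ2 m₁)
  have hm2 : m₂ = op (ψ m₂) • m₁ := hψ1.trans (hψ2 m₂)
  have hf : ψ m₂ = ψ m₂ * φ m₁ := by
    have h : ψ m₁ = ψ (op (φ m₁) • m₂) := congrArg ψ hm1
    rw [map_smul] at h
    rw [← hψ3] at h
    simpa [op_smul_eq_mul] using h
  symm
  calc m₂ = op (ψ m₂) • m₁ := hm2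
    _ = op (ψ m₂ * φ m₁) • m₁ := by rw [← hf]
    _ = op (φ m₁) • (op (ψ m₂) • m₁) := by rw [op_mul, mul_smul]
    _ = op (φ m₁) • m₂ := by rw [← hm2]
    _ = m₁ := hm1.symm
end

section
/- Let M be a regular right R-module and suppose m1 ≤⁻ m2 and m2 ≤⁻ m3 for m1, m2, m3 ∈ M. Then m1 ≤⁻ m3. -/
/- A right `R`-module is encoded as a left `Rᵐᵒᵖ`-module: `m · r = MulOpposite.op r • m`.
Likewise `R` itself is a right `R`-module via `op r • a = a * r`, so the dual
`M* = Hom_R(M, R)` is `M →ₗ[Rᵐᵒᵖ] R` and `S = End_R(M)` is `Module.End Rᵐᵒᵖ M`. -/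

open MulOpposite

/-- On a regular module, the minus relation is transitive. -/
theorem minusLE_trans (R : Type*) [Ring R] {M : Type*} [AddCommGroup M]
    [Module Rᵐᵒᵖ M] (hM : ∀ m : M, IsRegularElem R m) (m₁ m₂ m₃ : M)
    (h₁ : MinusLE R m₁ m₂) (h₂ : MinusLE R m₂ m₃) : MinusLE R m₁ m₃ := by
  obtain ⟨φ, h1a, h1b, h1c⟩ := h₁
  obtain ⟨ψ, h2a, h2b, h2c⟩ := h₂
  set u : R := ψ m₁ with hu
  -- m₁ = m₂ · φ(m₁)
  have e1 : m₁ = op (φ m₁) • m₂ := h1a.trans (h1b m₁)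
  -- u = ψ(m₂) * φ(m₁)
  have e2 : u = ψ m₂ * φ m₁ := by
    conv_lhs => rw [hu, e1, map_smul, op_smul_eq_mul]
  -- φ(m₂) = φ(m₂) * ψ(m₂)
  have e3 : φ m₂ = φ m₂ * ψ m₂ := by
    conv_lhs => rw [h2a, map_smul, op_smul_eq_mul]
  -- m₁ · ψ(m₂) = m₁
  have eC : op (ψ m₂) • m₁ = m₁ := by
    conv_rhs => rw [h1a, h1c, e3, op_mul, mul_smul, ← h1c, ← h1a]
  -- m₁ · u = m₁
  have eA : op u • m₁ = m₁ := by
    rw [e2, op_mul, mul_smul, eC, ← h1a]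
  -- m₃ · u = m₁
  have eB : op u • m₃ = m₁ := by
    rw [e2, op_mul, mul_smul, ← h2b m₂, ← h2a, ← e1]
  -- u is idempotent
  have eI : u * u = u := by
    calc u * u = op u • ψ m₁ := by rw [op_smul_eq_mul]
    _ = ψ (op u • m₁) := (map_smul ψ _ _).symm
    _ = u := by rw [eA]
  -- u * ψ(m₂) = u
  have eJ : u * ψ m₂ = u := by
    calc u * ψ m₂ = op (ψ m₂) • ψ m₁ := by rw [op_smul_eq_mul]
    _ = ψ (op (ψ m₂) • m₁) := (map_smul ψ _ _).symm
    _ = u := by rw [eC]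
  -- the witness functional χ(x) = u * ψ(x)
  refine ⟨{ toFun := fun x => u * ψ x,
            map_add' := fun x y => by simp [mul_add],
            map_smul' := fun r x => by
              simp only [map_smul, RingHom.id_apply, MulOpposite.smul_eq_mul_unop,
                mul_assoc] }, ?_, ?_, ?_⟩
  · show m₁ = op (u * ψ m₁) • m₁
    rw [← hu, eI, eA]
  · intro x
    show op (u * ψ x) • m₁ = op (u * ψ x) • m₃
    rw [op_mul, mul_smul, mul_smul, eA, eB]
  · show u * ψ m₁ = u * ψ m₃
    rw [← hu, eI, ← h2c, eJ]
end

section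
/- Let M be a regular right R-module over a Rickart *-ring R. Then the right-star relation ≤* (defined by: m1 ≤* m2 if there exist an idempotent f ∈ S and a self-adjoint idempotent a ∈ R such that l_S(m1) = l_S(f), r_R(m1) = r_R(a), f(m1) = f(m2), and m1·a = m2·a) is a partial order on M. -/
/- A right `R`-module is encoded as a left `Rᵐᵒᵖ`-module: `m · r = MulOpposite.op r • m`.
Likewise `R` itself is a right `R`-module via `op r • a = a * r`, so the dual
`M* = Hom_R(M, R)` is `M →ₗ[Rᵐᵒᵖ] R` and `S = End_R(M)` is `Module.End Rᵐᵒᵖ M`. -/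

open MulOpposite

/-- The right-star relation `m₁ ≤∗ m₂` on a right module over a `*`-ring `R`:
there exist an idempotent `f ∈ S` and a self-adjoint idempotent `a ∈ R` with
`l_S(m₁) = l_S(f)`, `r_R(m₁) = r_R(a)`, `f(m₁) = f(m₂)`, and `m₁·a = m₂·a`. -/
def RightStarLE (R : Type*) [Ring R] [StarRing R] {M : Type*} [AddCommGroup M]
    [Module Rᵐᵒᵖ M] (m₁ m₂ : M) : Prop :=
  ∃ (f : Module.End Rᵐᵒᵖ M) (a : R), f * f = f ∧ a * a = a ∧ star a = a ∧
    {g : Module.End Rᵐᵒᵖ M | g m₁ = 0} = {g : Module.End Rᵐᵒᵖ M | g * f = 0} ∧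
    {r : R | op r • m₁ = (0 : M)} = {x : R | a * x = 0} ∧
    f m₁ = f m₂ ∧ op a • m₁ = op a • m₂

/-- In a ring whose right annihilators are generated by projections, the
involution is proper: `c c* = 0` implies `c = 0`. -/
lemma proper_of_rickart {R : Type*} [Ring R] [StarRing R] {c : R}
    (h : ∃ p : R, p * p = p ∧ star p = p ∧
        {x : R | c * x = 0} = {x : R | ∃ y : R, x = p * y})
    (hc : c * star c = 0) : c = 0 := by
  obtain ⟨p, hp2, hps, hpr⟩ := h
  have h1 : star c ∈ {x : R | c * x = 0} := hc
  rw [hpr] at h1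
  obtain ⟨y, hy⟩ := h1
  have hpc : p * star c = star c := by rw [hy, ← mul_assoc, hp2]
  have hcp : c * p = 0 := by
    have hmem : p ∈ {x : R | ∃ y : R, x = p * y} := ⟨1, (mul_one p).symm⟩
    rw [← hpr] at hmem
    exact hmem
  calc c = star (star c) := (star_star c).symm
    _ = star (p * star c) := by rw [hpc]
    _ = c * p := by rw [star_mul, star_star, hps]
    _ = 0 := hcp

/-- The endomorphism `x ↦ m·φ(x)` associated with `φ ∈ M*` and `m ∈ M`. -/
def regIdem (R : Type*) [Ring R] {M : Type*} [AddCommGroup M] [Module Rᵐᵒᵖ M]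
    (φ : M →ₗ[Rᵐᵒᵖ] R) (m : M) : Module.End Rᵐᵒᵖ M where
  toFun x := op (φ x) • m
  map_add' x y := by
    show op (φ (x + y)) • m = op (φ x) • m + op (φ y) • m
    rw [map_add, op_add, add_smul]
  map_smul' r x := by
    show op (φ (r • x)) • m = r • (op (φ x) • m)
    rw [map_smul, ← op_unop r, op_smul_eq_mul, op_mul, op_unop, mul_smul]

@[simp] lemma regIdem_apply (R : Type*) [Ring R] {M : Type*} [AddCommGroup M]
    [Module Rᵐᵒᵖ M] (φ : M →ₗ[Rᵐᵒᵖ] R) (m x : M) :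
    regIdem R φ m x = op (φ x) • m := rfl

/-- If `M` is a regular right module over a Rickart `*`-ring `R`, then
the right-star relation is a partial order on `M`. -/
theorem rightStarLE_isPartialOrder (R : Type*) [Ring R] [StarRing R] {M : Type*}
    [AddCommGroup M] [Module Rᵐᵒᵖ M]
    (hM : ∀ m : M, IsRegularElem R m)
    (hRickart : ∀ b : R,
      (∃ p : R, p * p = p ∧ star p = p ∧
        {x : R | b * x = 0} = {x : R | ∃ y : R, x = p * y}) ∧
      (∃ q : R, q * q = q ∧ star q = q ∧
        {x : R | x * b = 0} = {x : R | ∃ y : R, x = y * q})) :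
    (∀ m : M, RightStarLE R m m) ∧
    (∀ m₁ m₂ : M, RightStarLE R m₁ m₂ → RightStarLE R m₂ m₁ → m₁ = m₂) ∧
    (∀ m₁ m₂ m₃ : M, RightStarLE R m₁ m₂ → RightStarLE R m₂ m₃ → RightStarLE R m₁ m₃) := by
  refine ⟨?_, ?_, ?_⟩
  · -- Reflexivity
    intro m
    obtain ⟨φ, hφ⟩ := hM m
    obtain ⟨⟨p, hp2, hps, hpr⟩, -⟩ := hRickart (φ m)
    set f : Module.End Rᵐᵒᵖ M := regIdem R φ m with hf
    have hfm : f m = m := by rw [hf, regIdem_apply, ← hφ]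
    refine ⟨f, 1 - p, ?_, ?_, ?_, ?_, ?_, rfl, rfl⟩
    · -- f idempotent
      ext x
      show f (f x) = f x
      conv_lhs => rw [show f x = op (φ x) • m from rfl]
      rw [map_smul, hfm]
      rfl
    · -- 1 - p idempotent
      rw [mul_sub, mul_one, sub_mul, one_mul, hp2, sub_self, sub_zero]
    · -- star (1 - p) = 1 - p
      rw [star_sub, star_one, hps]
    · -- l_S(m) = l_S(f)
      ext g
      simp only [Set.mem_setOf_eq]
      constructor
      · intro hg
        ext x
        show g (f x) = 0
        rw [show f x = op (φ x) • m from rfl, map_smul, hg, smul_zero]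
      · intro hg
        have h0 : g (f m) = 0 := congrArg (fun h : Module.End Rᵐᵒᵖ M => h m) hg
        rwa [hfm] at h0
    · -- r_R(m) = r_R(1 - p)
      ext r
      simp only [Set.mem_setOf_eq]
      have key : op r • m = 0 ↔ φ m * r = 0 := by
        constructor
        · intro h
          have h0 := congrArg φ h
          rw [map_smul, map_zero] at h0
          rwa [← op_unop (op r), op_smul_eq_mul, unop_op] at h0
        · intro h
          have h0 : op r • m = op (φ m * r) • m := by
            rw [op_mul, mul_smul, ← hφ]
          rw [h0, h, op_zero, zero_smul]
      rw [key]
      have hmem : φ m * r = 0 ↔ ∃ y, r = p * y := by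
        constructor
        · intro h
          have : r ∈ {x : R | φ m * x = 0} := h
          rwa [hpr] at this
        · intro h
          have : r ∈ {x : R | ∃ y, x = p * y} := h
          rw [← hpr] at this
          exact this
      rw [hmem]
      constructor
      · rintro ⟨y, rfl⟩
        rw [sub_mul, one_mul, ← mul_assoc, hp2, sub_self]
      · intro h
        rw [sub_mul, one_mul] at h
        exact ⟨r, sub_eq_zero.mp h⟩
  · -- Antisymmetry
    rintro m₁ m₂ ⟨f, a, hf2, ha2, has, hlf, hra, hfm, ham⟩
      ⟨f', a', hf'2, ha'2, ha's, hlf', hra', hfm', ham'⟩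
    have hraiff : ∀ r : R, op r • m₁ = 0 ↔ a * r = 0 := fun r => Set.ext_iff.mp hra r
    have hraiff' : ∀ r : R, op r • m₂ = 0 ↔ a' * r = 0 := fun r => Set.ext_iff.mp hra' r
    have hm1a : op a • m₁ = m₁ := by
      have h1 : a * (1 - a) = 0 := by rw [mul_sub, mul_one, ha2, sub_self]
      have h2 : op (1 - a) • m₁ = 0 := (hraiff _).mpr h1
      rw [op_sub, sub_smul, op_one, one_smul, sub_eq_zero] at h2
      exact h2.symm
    have hm2a' : op a' • m₂ = m₂ := by
      have h1 : a' * (1 - a') = 0 := by rw [mul_sub, mul_one, ha'2, sub_self]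
      have h2 : op (1 - a') • m₂ = 0 := (hraiff' _).mpr h1
      rw [op_sub, sub_smul, op_one, one_smul, sub_eq_zero] at h2
      exact h2.symm
    -- m₁ = m₂·a and m₂ = m₁·a'
    have hm1 : m₁ = op a • m₂ := by rw [← ham, hm1a]
    have hm2 : m₂ = op a' • m₁ := by rw [← ham', hm2a']
    -- m₁ = m₁·(a'·a), hence a = a·a'·a
    have h3 : op (a' * a) • m₁ = m₁ := by rw [op_mul, mul_smul, ← hm2, ← hm1]
    have h4 : op (1 - a' * a) • m₁ = 0 := by
      rw [op_sub, sub_smul, op_one, one_smul, h3, sub_self]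
    have h5 : a * (1 - a' * a) = 0 := (hraiff _).mp h4
    have h6 : a * a' * a = a := by
      rw [mul_sub, mul_one, sub_eq_zero] at h5
      rw [mul_assoc]
      exact h5.symm
    -- properness gives a·a' = a
    have t1 : a * a' * (a' * a) = a := by
      rw [mul_assoc a a' (a' * a), ← mul_assoc a' a' a, ha'2, ← mul_assoc]
      exact h6
    have t3 : a * (a' * a) = a := by rw [← mul_assoc]; exact h6
    have h7 : (a * a' - a) * star (a * a' - a) = 0 := by
      rw [star_sub, star_mul, has, ha's, sub_mul, mul_sub, mul_sub, t1, h6, t3, ha2]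
      simp
    have h8 : a * a' = a := sub_eq_zero.mp (proper_of_rickart (hRickart (a * a' - a)).1 h7)
    -- conclude
    rw [hm2, ← hm1a, ← mul_smul, ← op_mul, h8]
  · -- Transitivity
    rintro m₁ m₂ m₃ ⟨f, a, hf2, ha2, has, hlf, hra, hfm, ham⟩
      ⟨f', a', hf'2, ha'2, ha's, hlf', hra', hfm', ham'⟩
    have hraiff : ∀ r : R, op r • m₁ = 0 ↔ a * r = 0 := fun r => Set.ext_iff.mp hra r
    have hraiff' : ∀ r : R, op r • m₂ = 0 ↔ a' * r = 0 := fun r => Set.ext_iff.mp hra' r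
    have hlfiff : ∀ g : Module.End Rᵐᵒᵖ M, g m₁ = 0 ↔ g * f = 0 :=
      fun g => Set.ext_iff.mp hlf g
    have hlfiff' : ∀ g : Module.End Rᵐᵒᵖ M, g m₂ = 0 ↔ g * f' = 0 :=
      fun g => Set.ext_iff.mp hlf' g
    have hm1a : op a • m₁ = m₁ := by
      have h1 : a * (1 - a) = 0 := by rw [mul_sub, mul_one, ha2, sub_self]
      have h2 : op (1 - a) • m₁ = 0 := (hraiff _).mpr h1
      rw [op_sub, sub_smul, op_one, one_smul, sub_eq_zero] at h2
      exact h2.symm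
    have hm1 : m₁ = op a • m₂ := by rw [← ham, hm1a]
    have hfm1 : f m₁ = m₁ := by
      have h1 : (1 - f) * f = 0 := by rw [sub_mul, one_mul, hf2, sub_self]
      have h2 : (1 - f) m₁ = 0 := (hlfiff _).mpr h1
      rw [LinearMap.sub_apply, Module.End.one_apply, sub_eq_zero] at h2
      exact h2.symm
    have hm1f : m₁ = f m₂ := by rw [← hfm, hfm1]
    -- r_R(m₂) ⊆ r_R(m₁)
    have hsub : ∀ r : R, op r • m₂ = 0 → op r • m₁ = 0 := by
      intro r hr
      rw [hm1f, ← map_smul, hr, map_zero]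
    -- l_S(m₂) ⊆ l_S(m₁)
    have hsubl : ∀ g : Module.End Rᵐᵒᵖ M, g m₂ = 0 → g m₁ = 0 := by
      intro g hg
      rw [hm1, map_smul, hg, smul_zero]
    -- a = a·a', hence a'·a = a
    have haa' : a * (1 - a') = 0 := by
      apply (hraiff _).mp
      apply hsub
      apply (hraiff' _).mpr
      rw [mul_sub, mul_one, ha'2, sub_self]
    have ha'a : a' * a = a := by
      have h1 : a * a' = a := by
        rw [mul_sub, mul_one, sub_eq_zero] at haa'
        exact haa'.symm
      calc a' * a = star (a * a') := by rw [star_mul, has, ha's]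
        _ = a := by rw [h1, has]
    -- m₁·a = m₃·a
    have hma3 : op a • m₁ = op a • m₃ := by
      rw [ham, ← ha'a, op_mul, mul_smul, mul_smul, ham']
    -- f = f'·f
    have hff : (1 - f') * f = 0 := by
      apply (hlfiff _).mp
      apply hsubl
      apply (hlfiff' _).mpr
      rw [sub_mul, one_mul, hf'2, sub_self]
    have hf'f : f' * f = f := by
      rw [sub_mul, one_mul, sub_eq_zero] at hff
      exact hff.symm
    have hf'm2 : f' m₂ = m₂ := by
      have h1 : (1 - f') * f' = 0 := by rw [sub_mul, one_mul, hf'2, sub_self]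
      have h2 := (hlfiff' _).mpr h1
      rw [LinearMap.sub_apply, Module.End.one_apply, sub_eq_zero] at h2
      exact h2.symm
    have hf'm1 : f' m₁ = m₁ := by
      have h2 : (1 - f') m₁ = 0 := by
        apply hsubl
        rw [LinearMap.sub_apply, Module.End.one_apply, hf'm2, sub_self]
      rw [LinearMap.sub_apply, Module.End.one_apply, sub_eq_zero] at h2
      exact h2.symm
    refine ⟨f * f', a, ?_, ha2, has, ?_, hra, ?_, hma3⟩
    · -- idempotent
      calc f * f' * (f * f') = f * (f' * f) * f' := by
            rw [mul_assoc, mul_assoc, mul_assoc]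
        _ = f * f * f' := by rw [hf'f]
        _ = f * f' := by rw [hf2]
    · -- l_S(m₁) = l_S(f·f')
      have hffm1 : (f * f') m₁ = m₁ := by
        show f (f' m₁) = m₁
        rw [hf'm1, hfm1]
      ext g
      simp only [Set.mem_setOf_eq]
      constructor
      · intro hg
        have h1 := (hlfiff g).mp hg
        rw [← mul_assoc, h1, zero_mul]
      · intro hg
        have h1 : g * (f * f') = 0 := by rw [← mul_assoc]; exact hg
        have h2 : g ((f * f') m₁) = 0 :=
          congrArg (fun h : Module.End Rᵐᵒᵖ M => h m₁) h1
        rwa [hffm1] at h2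
    · -- (f·f') m₁ = (f·f') m₃
      show f (f' m₁) = f (f' m₃)
      rw [hf'm1, ← hfm', hf'm2]
      exact hfm
end

section
/- Let M be a regular right R-module such that S = End_R(M) is a Rickart *-ring. Then the left-star relation *≤ (defined by: m1 *≤ m2 if there exist a self-adjoint idempotent f ∈ S and an idempotent a ∈ R such that l_S(m1) = l_S(f), r_R(m1) = r_R(a), f(m1) = f(m2), and m1·a = m2·a) is a partial order on M. -/
/- A right `R`-module is encoded as a left `Rᵐᵒᵖ`-module: `m · r = MulOpposite.op r • m`.
Likewise `R` itself is a right `R`-module via `op r • a = a * r`, so the dual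
`M* = Hom_R(M, R)` is `M →ₗ[Rᵐᵒᵖ] R` and `S = End_R(M)` is `Module.End Rᵐᵒᵖ M`. -/

open MulOpposite

/-- The left-star relation `m₁ ∗≤ m₂` on a right `R`-module whose endomorphism ring
`S = End_R(M)` carries an involution: there exist a self-adjoint idempotent `f ∈ S`
and an idempotent `a ∈ R` with `l_S(m₁) = l_S(f)`, `r_R(m₁) = r_R(a)`,
`f(m₁) = f(m₂)`, and `m₁·a = m₂·a`. -/
def LeftStarLE (R : Type*) [Ring R] {M : Type*} [AddCommGroup M] [Module Rᵐᵒᵖ M]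
    [StarRing (Module.End Rᵐᵒᵖ M)] (m₁ m₂ : M) : Prop :=
  ∃ (f : Module.End Rᵐᵒᵖ M) (a : R), f * f = f ∧ star f = f ∧ a * a = a ∧
    {g : Module.End Rᵐᵒᵖ M | g m₁ = 0} = {g : Module.End Rᵐᵒᵖ M | g * f = 0} ∧
    {r : R | op r • m₁ = (0 : M)} = {x : R | a * x = 0} ∧
    f m₁ = f m₂ ∧ op a • m₁ = op a • m₂



section Aux
variable {R : Type*} [Ring R] {M : Type*} [AddCommGroup M] [Module Rᵐᵒᵖ M]

/-- If `l_S(m) = l_S(f)` with `f` idempotent, then `f m = m`. -/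
lemma fix_of_lann (f : Module.End Rᵐᵒᵖ M) (m : M) (hf : f * f = f)
    (h : {g : Module.End Rᵐᵒᵖ M | g m = 0} = {g : Module.End Rᵐᵒᵖ M | g * f = 0}) :
    f m = m := by
  have h1 : ((1 : Module.End Rᵐᵒᵖ M) - f) ∈ {g : Module.End Rᵐᵒᵖ M | g * f = 0} := by
    simp [Set.mem_setOf_eq, sub_mul, hf]
  rw [← h] at h1
  have h2 : ((1 : Module.End Rᵐᵒᵖ M) - f) m = 0 := h1
  rw [LinearMap.sub_apply, Module.End.one_apply, sub_eq_zero] at h2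
  exact h2.symm

/-- If `r_R(m) = r_R(a)` with `a` idempotent, then `m · a = m`. -/
lemma fix_of_rann (a : R) (m : M) (ha : a * a = a)
    (h : {r : R | op r • m = (0 : M)} = {x : R | a * x = 0}) :
    op a • m = m := by
  have h1 : (1 - a) ∈ {x : R | a * x = 0} := by
    simp [Set.mem_setOf_eq, mul_sub, ha]
  rw [← h] at h1
  have h2 : op (1 - a) • m = (0 : M) := h1
  rw [op_sub, op_one, sub_smul, one_smul, sub_eq_zero] at h2
  exact h2.symm

end Aux


/-- If `M` is a regular right `R`-module such that `S = End_R(M)` is a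
Rickart `*`-ring, then the left-star relation is a partial order on `M`. -/
theorem leftStarLE_isPartialOrder (R : Type*) [Ring R] {M : Type*}
    [AddCommGroup M] [Module Rᵐᵒᵖ M] [StarRing (Module.End Rᵐᵒᵖ M)]
    (hM : ∀ m : M, IsRegularElem R m)
    (hRickart : ∀ s : Module.End Rᵐᵒᵖ M,
      (∃ p : Module.End Rᵐᵒᵖ M, p * p = p ∧ star p = p ∧
        {x : Module.End Rᵐᵒᵖ M | s * x = 0} = {x : Module.End Rᵐᵒᵖ M | ∃ y, x = p * y}) ∧
      (∃ q : Module.End Rᵐᵒᵖ M, q * q = q ∧ star q = q ∧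
        {x : Module.End Rᵐᵒᵖ M | x * s = 0} = {x : Module.End Rᵐᵒᵖ M | ∃ y, x = y * q})) :
    (∀ m : M, LeftStarLE R m m) ∧
    (∀ m₁ m₂ : M, LeftStarLE R m₁ m₂ → LeftStarLE R m₂ m₁ → m₁ = m₂) ∧
    (∀ m₁ m₂ m₃ : M, LeftStarLE R m₁ m₂ → LeftStarLE R m₂ m₃ → LeftStarLE R m₁ m₃) := by
  refine ⟨?_, ?_, ?_⟩
  · -- Reflexivity
    intro m
    obtain ⟨φ, hφ⟩ := hM m
    -- the idempotent endomorphism e : x ↦ m · φ(x)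
    set e : Module.End Rᵐᵒᵖ M :=
      { toFun := fun x => op (φ x) • m
        map_add' := fun x y => by simp [map_add, op_add, add_smul]
        map_smul' := fun r x => by
          simp only [map_smul, RingHom.id_apply]
          rw [← op_unop r, op_smul_eq_mul, op_mul, op_unop, mul_smul] } with he
    have heapp : ∀ x : M, e x = op (φ x) • m := fun x => rfl
    have hem : e m = m := by rw [heapp, ← hφ]
    have haa : φ m * φ m = φ m := by
      have h := congrArg φ hφ
      rw [map_smul, op_smul_eq_mul] at h
      exact h.symm
    have hle : {g : Module.End Rᵐᵒᵖ M | g m = 0} = {g : Module.End Rᵐᵒᵖ M | g * e = 0} := by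
      ext g
      simp only [Set.mem_setOf_eq]
      constructor
      · intro hg
        ext x
        show g (e x) = 0
        rw [heapp, map_smul, hg, smul_zero]
      · intro hg
        have h : (g * e) m = (0 : Module.End Rᵐᵒᵖ M) m := by rw [hg]
        rwa [Module.End.mul_apply, hem, LinearMap.zero_apply] at h
    obtain ⟨-, q, hq2, hqs, hq⟩ := hRickart e
    have hf2 : (1 - q) * (1 - q) = 1 - q := by
      rw [sub_mul, one_mul, mul_sub, mul_one, hq2, sub_self, sub_zero]
    have hfs : star (1 - q) = 1 - q := by rw [star_sub, star_one, hqs]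
    have hql : ∀ g : Module.End Rᵐᵒᵖ M, (∃ y, g = y * q) ↔ g * (1 - q) = 0 := by
      intro g
      constructor
      · rintro ⟨y, rfl⟩
        rw [mul_assoc, mul_sub, mul_one, hq2, sub_self, mul_zero]
      · intro hg
        refine ⟨g, ?_⟩
        rw [mul_sub, mul_one, sub_eq_zero] at hg
        exact hg
    have hlset : {g : Module.End Rᵐᵒᵖ M | g m = 0} =
        {g : Module.End Rᵐᵒᵖ M | g * (1 - q) = 0} := by
      rw [hle, hq]
      ext g
      exact hql g
    have hrset : {r : R | op r • m = (0 : M)} = {x : R | φ m * x = 0} := by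
      ext r
      simp only [Set.mem_setOf_eq]
      constructor
      · intro h
        have h2 := congrArg φ h
        rw [map_smul, map_zero, op_smul_eq_mul] at h2
        exact h2
      · intro h
        calc op r • m = op r • (op (φ m) • m) := by rw [← hφ]
          _ = op (φ m * r) • m := by rw [← mul_smul, ← op_mul]
          _ = 0 := by rw [h, op_zero, zero_smul]
    exact ⟨1 - q, φ m, hf2, hfs, haa, hlset, hrset, rfl, rfl⟩
  · -- Antisymmetry
    rintro m₁ m₂ ⟨f, a, hf2, hfs, ha2, hlf, hra, hfm, ham⟩
      ⟨f', a', hf2', hfs', ha2', hlf', hra', hfm', ham'⟩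
    have hfm₁ : f m₁ = m₁ := fix_of_lann f m₁ hf2 hlf
    have hf'm₂ : f' m₂ = m₂ := fix_of_lann f' m₂ hf2' hlf'
    have ham₁ : op a • m₁ = m₁ := fix_of_rann a m₁ ha2 hra
    have ha'm₂ : op a' • m₂ = m₂ := fix_of_rann a' m₂ ha2' hra'
    have h12 : m₁ = op a • m₂ := by rw [← ham, ham₁]
    have h21 : m₂ = op a' • m₁ := by rw [← ham', ha'm₂]
    have hll : {g : Module.End Rᵐᵒᵖ M | g m₁ = 0} = {g : Module.End Rᵐᵒᵖ M | g m₂ = 0} := by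
      ext g
      simp only [Set.mem_setOf_eq]
      constructor
      · intro h
        rw [h21, map_smul, h, smul_zero]
      · intro h
        rw [h12, map_smul, h, smul_zero]
    have hff : {g : Module.End Rᵐᵒᵖ M | g * f = 0} = {g : Module.End Rᵐᵒᵖ M | g * f' = 0} := by
      rw [← hlf, hll, hlf']
    have h1 : (1 - f') * f = 0 := by
      have hm : (1 - f') ∈ {g : Module.End Rᵐᵒᵖ M | g * f' = 0} := by
        simp [Set.mem_setOf_eq, sub_mul, hf2']
      rw [← hff] at hm
      exact hm
    have h2 : (1 - f) * f' = 0 := by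
      have hm : (1 - f) ∈ {g : Module.End Rᵐᵒᵖ M | g * f = 0} := by
        simp [Set.mem_setOf_eq, sub_mul, hf2]
      rw [hff] at hm
      exact hm
    rw [sub_mul, one_mul, sub_eq_zero] at h1 h2
    have h3 : f' = f' * f := by
      have h := congrArg star h2
      rw [star_mul, hfs, hfs'] at h
      exact h
    have hfeq : f = f' := h1.trans h3.symm
    rw [← hfm₁, hfm, hfeq]
    exact hf'm₂
  · -- Transitivity
    rintro m₁ m₂ m₃ ⟨f, a, hf2, hfs, ha2, hlf, hra, hfm, ham⟩
      ⟨f', a', hf2', hfs', ha2', hlf', hra', hfm', ham'⟩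
    have hfm₁ : f m₁ = m₁ := fix_of_lann f m₁ hf2 hlf
    have hf'm₂ : f' m₂ = m₂ := fix_of_lann f' m₂ hf2' hlf'
    have ham₁ : op a • m₁ = m₁ := fix_of_rann a m₁ ha2 hra
    have ha'm₂ : op a' • m₂ = m₂ := fix_of_rann a' m₂ ha2' hra'
    have h12 : m₁ = op a • m₂ := by rw [← ham, ham₁]
    have h12f : m₁ = f m₂ := by rw [← hfm, hfm₁]
    have h23 : m₂ = op a' • m₃ := by rw [← ham', ha'm₂]
    have h23f : m₂ = f' m₃ := by rw [← hfm', hf'm₂]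
    -- f = f * f'
    have hsub : (1 - f') * f = 0 := by
      have hmem : ((1 : Module.End Rᵐᵒᵖ M) - f') m₂ = 0 := by
        rw [LinearMap.sub_apply, Module.End.one_apply, hf'm₂, sub_self]
      have hmem1 : ((1 : Module.End Rᵐᵒᵖ M) - f') ∈ {g : Module.End Rᵐᵒᵖ M | g m₁ = 0} := by
        simp only [Set.mem_setOf_eq]
        rw [h12, map_smul, hmem, smul_zero]
      rw [hlf] at hmem1
      exact hmem1
    rw [sub_mul, one_mul, sub_eq_zero] at hsub
    have hff' : f = f * f' := by
      have h := congrArg star hsub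
      rw [star_mul, hfs, hfs'] at h
      exact h
    -- a = a * a'
    have haa' : a = a * a' := by
      have hmem : op (1 - a') • m₂ = (0 : M) := by
        rw [op_sub, op_one, sub_smul, one_smul, ha'm₂, sub_self]
      have hmem1 : (1 - a') ∈ {r : R | op r • m₁ = (0 : M)} := by
        simp only [Set.mem_setOf_eq]
        rw [h12f, ← map_smul, hmem, map_zero]
      rw [hra] at hmem1
      have h : a * (1 - a') = 0 := hmem1
      rwa [mul_sub, mul_one, sub_eq_zero] at h
    have hb2 : (a' * a) * (a' * a) = a' * a := by
      conv_lhs => rw [mul_assoc, ← mul_assoc a a' a, ← haa', ha2]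
    have hb3 : op (a' * a) • m₃ = m₁ := by
      rw [op_mul, mul_smul, ← h23, ← h12]
    have hbm₁ : op (a' * a) • m₁ = m₁ := by
      rw [← hb3, ← mul_smul, ← op_mul, hb2]
    have hrset : {r : R | op r • m₁ = (0 : M)} = {x : R | (a' * a) * x = 0} := by
      ext x
      simp only [Set.mem_setOf_eq]
      constructor
      · intro h
        have hax : a * x = 0 := by
          have hm : x ∈ {r : R | op r • m₁ = (0 : M)} := h
          rw [hra] at hm
          exact hm
        rw [mul_assoc, hax, mul_zero]
      · intro h
        rw [← hb3, ← mul_smul, ← op_mul, h, op_zero, zero_smul]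
    have hsf : f m₁ = f m₃ := by
      conv_rhs => rw [hff']
      rw [Module.End.mul_apply, ← h23f]
      exact hfm
    have hlast : op (a' * a) • m₁ = op (a' * a) • m₃ := by rw [hbm₁, hb3]
    exact ⟨f, a' * a, hf2, hfs, hb2, hlf, hrset, hsf, hlast⟩
end

section
/- Let M be a regular right R-module such that R is a Rickart *-ring and S = End_R(M) is a Rickart *-ring. Then the star relation ≤⋆ (defined by: m1 ≤⋆ m2 if there exist a self-adjoint idempotent f ∈ S and a self-adjoint idempotent a ∈ R such that l_S(m1) = l_S(f), r_R(m1) = r_R(a), f(m1) = f(m2), and m1·a = m2·a) is a partial order on M. -/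
open MulOpposite

/-- The star relation `m₁ ≤⋆ m₂` on a right module over a `*`-ring `R` whose
endomorphism ring `S = End_R(M)` also carries an involution: there exist a
self-adjoint idempotent `f ∈ S` and a self-adjoint idempotent `a ∈ R` with
`l_S(m₁) = l_S(f)`, `r_R(m₁) = r_R(a)`, `f(m₁) = f(m₂)`, and `m₁·a = m₂·a`. -/
def StarLE (R : Type*) [Ring R] [StarRing R] {M : Type*} [AddCommGroup M]
    [Module Rᵐᵒᵖ M] [StarRing (Module.End Rᵐᵒᵖ M)] (m₁ m₂ : M) : Prop :=
  ∃ (f : Module.End Rᵐᵒᵖ M) (a : R), f * f = f ∧ star f = f ∧ a * a = a ∧ star a = a ∧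
    {g : Module.End Rᵐᵒᵖ M | g m₁ = 0} = {g : Module.End Rᵐᵒᵖ M | g * f = 0} ∧
    {r : R | op r • m₁ = (0 : M)} = {x : R | a * x = 0} ∧
    f m₁ = f m₂ ∧ op a • m₁ = op a • m₂


/-- A Rickart-type condition on right annihilators implies the involution is proper:
`b * star b = 0 → b = 0`. -/
lemma aux_proper {R : Type*} [Ring R] [StarRing R] (b : R)
    (h : ∃ p : R, p * p = p ∧ star p = p ∧
      {x : R | b * x = 0} = {x : R | ∃ y : R, x = p * y})
    (hb : b * star b = 0) : b = 0 := by
  obtain ⟨p, hp2, hps, hset⟩ := h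
  have hbp : b * p = 0 := by
    have : p ∈ {x : R | ∃ y : R, x = p * y} := ⟨p, hp2.symm⟩
    rw [← hset] at this
    exact this
  have : star b ∈ {x : R | b * x = 0} := hb
  rw [hset] at this
  obtain ⟨y, hy⟩ := this
  have hbyp : b = star y * p := by
    have := congrArg star hy
    rwa [star_star, star_mul, hps] at this
  calc b = star y * p := hbyp
    _ = star y * (p * p) := by rw [hp2]
    _ = (star y * p) * p := by rw [mul_assoc]
    _ = b * p := by rw [← hbyp]
    _ = 0 := hbp

/-- If `M` is a regular right module over a Rickart `*`-ring `R` and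
`S = End_R(M)` is also a Rickart `*`-ring, then the star relation is a partial
order on `M`. -/
theorem starLE_isPartialOrder (R : Type*) [Ring R] [StarRing R] {M : Type*}
    [AddCommGroup M] [Module Rᵐᵒᵖ M] [StarRing (Module.End Rᵐᵒᵖ M)]
    (hM : ∀ m : M, IsRegularElem R m)
    (hRickartR : ∀ b : R,
      (∃ p : R, p * p = p ∧ star p = p ∧
        {x : R | b * x = 0} = {x : R | ∃ y : R, x = p * y}) ∧
      (∃ q : R, q * q = q ∧ star q = q ∧
        {x : R | x * b = 0} = {x : R | ∃ y : R, x = y * q}))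
    (hRickartS : ∀ s : Module.End Rᵐᵒᵖ M,
      (∃ p : Module.End Rᵐᵒᵖ M, p * p = p ∧ star p = p ∧
        {x : Module.End Rᵐᵒᵖ M | s * x = 0} = {x : Module.End Rᵐᵒᵖ M | ∃ y, x = p * y}) ∧
      (∃ q : Module.End Rᵐᵒᵖ M, q * q = q ∧ star q = q ∧
        {x : Module.End Rᵐᵒᵖ M | x * s = 0} = {x : Module.End Rᵐᵒᵖ M | ∃ y, x = y * q})) :
    (∀ m : M, StarLE R m m) ∧
    (∀ m₁ m₂ : M, StarLE R m₁ m₂ → StarLE R m₂ m₁ → m₁ = m₂) ∧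
    (∀ m₁ m₂ m₃ : M, StarLE R m₁ m₂ → StarLE R m₂ m₃ → StarLE R m₁ m₃) := by
  refine ⟨?_, ?_, ?_⟩
  · -- Reflexivity
    intro m
    obtain ⟨φ, hφ⟩ := hM m
    -- the endomorphism s : x ↦ m · φ(x)
    let s : Module.End Rᵐᵒᵖ M :=
    { toFun := fun x => op (φ x) • m
      map_add' := by intro x y; simp [op_add, add_smul]
      map_smul' := by
        intro r x
        simp only [map_smul, RingHom.id_apply]
        rw [show (r • φ x : R) = φ x * r.unop from rfl, op_mul, op_unop, mul_smul]
      }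
    have hs_apply : ∀ x : M, s x = op (φ x) • m := fun _ => rfl
    -- l_S(m) = l_S(s)
    have hls : {g : Module.End Rᵐᵒᵖ M | g m = 0} = {g : Module.End Rᵐᵒᵖ M | g * s = 0} := by
      ext g
      simp only [Set.mem_setOf_eq]
      constructor
      · intro hg
        ext x
        show g (s x) = 0
        rw [hs_apply, map_smul, hg, smul_zero]
      · intro hg
        have : (g * s) m = 0 := by rw [hg]; rfl
        have h2 : g (s m) = 0 := this
        rwa [hs_apply, ← hφ] at h2
    -- r_R(m) = r_R(φ m)
    have hrs : {r : R | op r • m = (0 : M)} = {x : R | φ m * x = 0} := by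
      ext x
      simp only [Set.mem_setOf_eq]
      constructor
      · intro hx
        have := congrArg φ hx
        rw [map_smul, map_zero] at this
        rw [show (op x • φ m : R) = φ m * x from op_smul_eq_mul .. ] at this
        exact this
      · intro hx
        calc op x • m = op x • (op (φ m) • m) := by rw [← hφ]
          _ = op (φ m * x) • m := by rw [← mul_smul, ← op_mul]
          _ = 0 := by rw [hx, op_zero, zero_smul]
    obtain ⟨⟨p, hp2, hps, hpset⟩, -⟩ := hRickartR (φ m)
    obtain ⟨-, ⟨q, hq2, hqs, hqset⟩⟩ := hRickartS s
    refine ⟨1 - q, 1 - p, ?_, ?_, ?_, ?_, ?_, ?_, rfl, rfl⟩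
    · rw [sub_mul, one_mul, mul_sub, mul_one, hq2, sub_self, sub_zero]
    · rw [star_sub, star_one, hqs]
    · rw [sub_mul, one_mul, mul_sub, mul_one, hp2, sub_self, sub_zero]
    · rw [star_sub, star_one, hps]
    · rw [hls, hqset]
      ext g
      simp only [Set.mem_setOf_eq]
      constructor
      · rintro ⟨y, rfl⟩
        rw [mul_sub, mul_one, mul_assoc, hq2, sub_self]
      · intro hg
        rw [mul_sub, mul_one] at hg
        exact ⟨g, sub_eq_zero.mp hg⟩
    · rw [hrs, hpset]
      ext x
      simp only [Set.mem_setOf_eq]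
      constructor
      · rintro ⟨y, rfl⟩
        rw [sub_mul, one_mul, ← mul_assoc, hp2, sub_self]
      · intro hx
        rw [sub_mul, one_mul] at hx
        exact ⟨x, sub_eq_zero.mp hx⟩
  · -- Antisymmetry
    rintro m₁ m₂ ⟨f, a, hf2, hfs, ha2, has, hlf, hra, hfm, ham⟩
      ⟨f', a', hf'2, hf's, ha'2, ha's, hlf', hra', hfm', ham'⟩
    set d := m₂ - m₁ with hd
    have hda : op a • d = 0 := by rw [hd, smul_sub, ham, sub_self]
    have hda' : op a' • d = 0 := by rw [hd, smul_sub, ham', sub_self]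
    obtain ⟨φ, hφ⟩ := hM d
    have hba : φ d * a = 0 := by
      have := congrArg φ hda
      rwa [map_smul, map_zero, show (op a • φ d : R) = φ d * a from op_smul_eq_mul ..] at this
    have hba' : φ d * a' = 0 := by
      have := congrArg φ hda'
      rwa [map_smul, map_zero, show (op a' • φ d : R) = φ d * a' from op_smul_eq_mul ..] at this
    have hasb : a * star (φ d) = 0 := by
      have := congrArg star hba
      rwa [star_mul, has, star_zero] at this
    have hasb' : a' * star (φ d) = 0 := by
      have := congrArg star hba'
      rwa [star_mul, ha's, star_zero] at this
    have hm₁b : op (star (φ d)) • m₁ = 0 := by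
      have : star (φ d) ∈ {x : R | a * x = 0} := hasb
      rw [← hra] at this
      exact this
    have hm₂b : op (star (φ d)) • m₂ = 0 := by
      have : star (φ d) ∈ {x : R | a' * x = 0} := hasb'
      rw [← hra'] at this
      exact this
    have hdb : op (star (φ d)) • d = 0 := by rw [hd, smul_sub, hm₁b, hm₂b, sub_self]
    have hbsb : φ d * star (φ d) = 0 := by
      have := congrArg φ hdb
      rwa [map_smul, map_zero,
        show (op (star (φ d)) • φ d : R) = φ d * star (φ d) from op_smul_eq_mul ..] at this
    have hb0 : φ d = 0 := aux_proper (φ d) (hRickartR (φ d)).1 hbsb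
    have : d = 0 := by
      rw [hφ, hb0, op_zero, zero_smul]
    exact (sub_eq_zero.mp this).symm
  · -- Transitivity
    rintro m₁ m₂ m₃ ⟨f, a, hf2, hfs, ha2, has, hlf, hra, hfm, ham⟩
      ⟨f', a', hf'2, hf's, ha'2, ha's, hlf', hra', hfm', ham'⟩
    -- f m₁ = m₁
    have hfm₁ : f m₁ = m₁ := by
      have h1 : (1 - f) ∈ {g : Module.End Rᵐᵒᵖ M | g * f = 0} := by
        show (1 - f) * f = 0
        rw [sub_mul, one_mul, hf2, sub_self]
      rw [← hlf] at h1
      have : m₁ - f m₁ = 0 := h1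
      exact (sub_eq_zero.mp this).symm
    have ham₁ : op a • m₁ = m₁ := by
      have h1 : (1 - a) ∈ {x : R | a * x = 0} := by
        show a * (1 - a) = 0
        rw [mul_sub, mul_one, ha2, sub_self]
      rw [← hra] at h1
      have : m₁ - op a • m₁ = 0 := by
        have h2 : op ((1:R) - a) • m₁ = 0 := h1
        rwa [op_sub, sub_smul, op_one, one_smul] at h2
      exact (sub_eq_zero.mp this).symm
    have hf'm₂ : f' m₂ = m₂ := by
      have h1 : (1 - f') ∈ {g : Module.End Rᵐᵒᵖ M | g * f' = 0} := by
        show (1 - f') * f' = 0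
        rw [sub_mul, one_mul, hf'2, sub_self]
      rw [← hlf'] at h1
      have : m₂ - f' m₂ = 0 := h1
      exact (sub_eq_zero.mp this).symm
    have ha'm₂ : op a' • m₂ = m₂ := by
      have h1 : (1 - a') ∈ {x : R | a' * x = 0} := by
        show a' * (1 - a') = 0
        rw [mul_sub, mul_one, ha'2, sub_self]
      rw [← hra'] at h1
      have h2 : op ((1:R) - a') • m₂ = 0 := h1
      rw [op_sub, sub_smul, op_one, one_smul] at h2
      exact (sub_eq_zero.mp h2).symm
    -- m₁ = f m₂ and m₁ = op a • m₂
    have hm₁fm₂ : m₁ = f m₂ := by rw [← hfm, hfm₁]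
    have hm₁am₂ : m₁ = op a • m₂ := by rw [← ham, ham₁]
    -- f = f' * f
    have hf'f : f' * f = f := by
      have h1 : (1 - f') ∈ {g : Module.End Rᵐᵒᵖ M | g m₁ = 0} := by
        show (1 - f') m₁ = 0
        have hz : op a • m₂ - f' (op a • m₂) = 0 := by
          rw [map_smul, hf'm₂, sub_self]
        calc (1 - f') m₁ = m₁ - f' m₁ := by simp [LinearMap.sub_apply]
          _ = op a • m₂ - f' (op a • m₂) := by rw [← hm₁am₂]
          _ = 0 := hz
      rw [hlf] at h1
      have h2 : (1 - f') * f = 0 := h1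
      rw [sub_mul, one_mul] at h2
      exact (sub_eq_zero.mp h2).symm
    have hff' : f * f' = f := by
      have := congrArg star hf'f
      rwa [star_mul, hfs, hf's] at this
    -- a = a * a'
    have haa' : a * a' = a := by
      have h1 : (1 - a') ∈ {r : R | op r • m₁ = 0} := by
        show op ((1:R) - a') • m₁ = 0
        have hz : op ((1:R) - a') • m₂ = 0 := by
          rw [op_sub, sub_smul, op_one, one_smul, ha'm₂, sub_self]
        calc op ((1:R) - a') • m₁ = op ((1:R) - a') • f m₂ := by rw [← hm₁fm₂]
          _ = f (op ((1:R) - a') • m₂) := (map_smul f _ _).symm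
          _ = 0 := by rw [hz, map_zero]
      rw [hra] at h1
      have h2 : a * (1 - a') = 0 := h1
      rw [mul_sub, mul_one] at h2
      exact (sub_eq_zero.mp h2).symm
    have ha'a : a' * a = a := by
      have := congrArg star haa'
      rwa [star_mul, has, ha's] at this
    -- assemble
    refine ⟨f, a, hf2, hfs, ha2, has, hlf, hra, ?_, ?_⟩
    · calc f m₁ = f m₂ := hfm
        _ = (f * f') m₂ := by rw [hff']
        _ = f (f' m₂) := rfl
        _ = f (f' m₃) := by rw [hfm']
        _ = (f * f') m₃ := rfl
        _ = f m₃ := by rw [hff']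
    · calc op a • m₁ = op a • m₂ := ham
        _ = op a • (op a' • m₂) := by rw [ha'm₂]
        _ = op (a' * a) • m₂ := by rw [← mul_smul, ← op_mul]
        _ = op (a' * a) • m₃ := by rw [op_mul, mul_smul, ham', ← mul_smul, ← op_mul]
        _ = op a • m₃ := by rw [ha'a]
end

section
/- Let M be a regular right R-module, m1, m2 ∈ M, and g ∈ S = End_R(M) invertible. Then m1 ≤⁻ m2 if and only if g(m1) ≤⁻ g(m2). -/
/- A right `R`-module is encoded as a left `Rᵐᵒᵖ`-module: `m · r = MulOpposite.op r • m`.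
Likewise `R` itself is a right `R`-module via `op r • a = a * r`, so the dual
`M* = Hom_R(M, R)` is `M →ₗ[Rᵐᵒᵖ] R` and `S = End_R(M)` is `Module.End Rᵐᵒᵖ M`. -/

open MulOpposite

private lemma minusLE_smul_of_unit (R : Type*) [Ring R] {M : Type*} [AddCommGroup M]
    [Module Rᵐᵒᵖ M] {m₁ m₂ : M} (u : (Module.End Rᵐᵒᵖ M)ˣ)
    (h : MinusLE R m₁ m₂) : MinusLE R ((u : Module.End Rᵐᵒᵖ M) m₁) ((u : Module.End Rᵐᵒᵖ M) m₂) := by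
  obtain ⟨φ, h1, h2, h3⟩ := h
  refine ⟨φ.comp (↑u⁻¹ : Module.End Rᵐᵒᵖ M), ?_, ?_, ?_⟩
  · have hinv : (↑u⁻¹ : Module.End Rᵐᵒᵖ M) ((u : Module.End Rᵐᵒᵖ M) m₁) = m₁ := by
      rw [← Module.End.mul_apply, u.inv_mul, Module.End.one_apply]
    simp only [LinearMap.comp_apply, hinv, ← map_smul, ← h1]
  · intro x
    simp only [LinearMap.comp_apply, ← map_smul, h2 ((↑u⁻¹ : Module.End Rᵐᵒᵖ M) x)]
  · have hinv : ∀ m : M, (↑u⁻¹ : Module.End Rᵐᵒᵖ M) ((u : Module.End Rᵐᵒᵖ M) m) = m := by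
      intro m; rw [← Module.End.mul_apply, u.inv_mul, Module.End.one_apply]
    simp only [LinearMap.comp_apply, hinv, h3]

/-- On a regular module, `m₁ ≤⁻ m₂` iff `g(m₁) ≤⁻ g(m₂)` for every
invertible `g ∈ S = End_R(M)`. -/
theorem minusLE_iff_unit_smul_left (R : Type*) [Ring R] {M : Type*} [AddCommGroup M]
    [Module Rᵐᵒᵖ M] (hM : ∀ m : M, IsRegularElem R m) (m₁ m₂ : M)
    (g : Module.End Rᵐᵒᵖ M) (hg : IsUnit g) :
    MinusLE R m₁ m₂ ↔ MinusLE R (g m₁) (g m₂) := by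
  lift g to (Module.End Rᵐᵒᵖ M)ˣ using hg with u
  constructor
  · exact minusLE_smul_of_unit R u
  · intro h
    have := minusLE_smul_of_unit R u⁻¹ h
    simpa only [← Module.End.mul_apply, u.inv_mul, Module.End.one_apply] using this
end

section
/- Let M be a regular right R-module and m1, m2 ∈ M. Then m1 ≤⁻ m2 if and only if there exist an idempotent f ∈ S and an idempotent a ∈ R such that l_S(f) ⊆ l_S(m1), r_R(a) ⊆ r_R(m1), f(m1) = f(m2), and m1·a = m2·a. -/
/- A right `R`-module is encoded as a left `Rᵐᵒᵖ`-module: `m · r = MulOpposite.op r • m`.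
Likewise `R` itself is a right `R`-module via `op r • a = a * r`, so the dual
`M* = Hom_R(M, R)` is `M →ₗ[Rᵐᵒᵖ] R` and `S = End_R(M)` is `Module.End Rᵐᵒᵖ M`. -/

open MulOpposite

/-- On a regular module, `m₁ ≤⁻ m₂` iff there are idempotents `f ∈ S`,
`a ∈ R` with `l_S(f) ⊆ l_S(m₁)`, `r_R(a) ⊆ r_R(m₁)`, `f(m₁) = f(m₂)`, `m₁·a = m₂·a`. -/
theorem minusLE_iff_exists_idempotents_subset (R : Type*) [Ring R] {M : Type*}
    [AddCommGroup M] [Module Rᵐᵒᵖ M] (hM : ∀ m : M, IsRegularElem R m) (m₁ m₂ : M) :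
    MinusLE R m₁ m₂ ↔
      ∃ (f : Module.End Rᵐᵒᵖ M) (a : R), f * f = f ∧ a * a = a ∧
        {g : Module.End Rᵐᵒᵖ M | g * f = 0} ⊆ {g : Module.End Rᵐᵒᵖ M | g m₁ = 0} ∧
        {x : R | a * x = 0} ⊆ {r : R | op r • m₁ = (0 : M)} ∧
        f m₁ = f m₂ ∧ op a • m₁ = op a • m₂ := by
  constructor
  · rintro ⟨φ, h1, h2, h3⟩
    refine ⟨{ toFun := fun x => op (φ x) • m₁
              map_add' := by intro x y; simp [add_smul]
              map_smul' := by
                intro r x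
                simp only [map_smul, RingHom.id_apply]
                rw [show op ((r • φ x)) = r * op (φ x) by
                  induction r using MulOpposite.rec' with
                  | h r => simp [op_smul_eq_mul]
                ]
                rw [mul_smul] }, φ m₁, ?_, ?_, ?_, ?_, ?_, ?_⟩
    · ext x
      simp only [Module.End.mul_apply, LinearMap.coe_mk, AddHom.coe_mk, map_smul]
      rw [← h1]
    · have : φ m₁ = op (φ m₁) • φ m₁ := by rw [← map_smul, ← h1]
      rw [op_smul_eq_mul] at this
      exact this.symm
    · intro g hg
      simp only [Set.mem_setOf_eq] at hg ⊢
      have := congrArg (fun h : Module.End Rᵐᵒᵖ M => h m₁) hg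
      simp only [Module.End.mul_apply, LinearMap.coe_mk, AddHom.coe_mk, LinearMap.zero_apply]
        at this
      rwa [← h1] at this
    · intro x hx
      simp only [Set.mem_setOf_eq] at hx ⊢
      calc op x • m₁ = op x • op (φ m₁) • m₁ := by rw [← h1]
        _ = op (φ m₁ * x) • m₁ := by rw [← mul_smul]; rfl
        _ = 0 := by rw [hx]; simp
    · simp only [LinearMap.coe_mk, AddHom.coe_mk]
      rw [h3]
    · exact h2 m₁
  · rintro ⟨f, a, hf, ha, hlf, hra, hfm, ham⟩
    obtain ⟨ψ, hψ⟩ := hM m₁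
    -- m₁ = f m₁
    have h1f : f m₁ = m₁ := by
      have : (1 - f) * f = 0 := by rw [sub_mul, one_mul, hf, sub_self]
      have := hlf this
      simp only [Set.mem_setOf_eq, LinearMap.sub_apply, Module.End.one_apply,
        sub_eq_zero] at this
      exact this.symm
    -- m₁ = m₁ · a
    have h1a : op a • m₁ = m₁ := by
      have : a * (1 - a) = 0 := by rw [mul_sub, mul_one, ha, sub_self]
      have := hra this
      simp only [Set.mem_setOf_eq] at this
      rw [show op (1 - a) = 1 - op a from rfl, sub_smul, one_smul, sub_eq_zero] at this
      exact this.symm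
    refine ⟨{ toFun := fun x => a * ψ (f x)
              map_add' := by intro x y; simp [mul_add]
              map_smul' := by
                intro r x
                simp only [map_smul, RingHom.id_apply]
                induction r using MulOpposite.rec' with
                | h r => simp [op_smul_eq_mul, mul_assoc] }, ?_, ?_, ?_⟩
    · simp only [LinearMap.coe_mk, AddHom.coe_mk, h1f]
      calc m₁ = op (ψ m₁) • m₁ := hψ
        _ = op (ψ m₁) • op a • m₁ := by rw [h1a]
        _ = op (a * ψ m₁) • m₁ := by rw [← mul_smul]; rfl
    · intro x
      simp only [LinearMap.coe_mk, AddHom.coe_mk]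
      rw [show (op (a * ψ (f x)) : Rᵐᵒᵖ) = op (ψ (f x)) * op a from rfl, mul_smul,
        mul_smul, ham]
    · simp only [LinearMap.coe_mk, AddHom.coe_mk, hfm]
end

section
/- Let M be a regular right R-module and m1, m2 ∈ M. Then m1 ≤⁻ m2 if and only if there exist an idempotent f ∈ S and an idempotent a ∈ R such that m1R ⊆ f(M), S·m1 ⊆ M·a, f(m1) = f(m2), and m1·a = m2·a. -/
/- A right `R`-module is encoded as a left `Rᵐᵒᵖ`-module: `m · r = MulOpposite.op r • m`.
Likewise `R` itself is a right `R`-module via `op r • a = a * r`, so the dual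
`M* = Hom_R(M, R)` is `M →ₗ[Rᵐᵒᵖ] R` and `S = End_R(M)` is `Module.End Rᵐᵒᵖ M`. -/

open MulOpposite

/-- On a regular module, `m₁ ≤⁻ m₂` iff there are idempotents `f ∈ S`,
`a ∈ R` with `m₁R ⊆ f(M)`, `S·m₁ ⊆ M·a`, `f(m₁) = f(m₂)`, and `m₁·a = m₂·a`. -/
theorem minusLE_iff_exists_idempotents_images (R : Type*) [Ring R] {M : Type*}
    [AddCommGroup M] [Module Rᵐᵒᵖ M] (hM : ∀ m : M, IsRegularElem R m) (m₁ m₂ : M) :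
    MinusLE R m₁ m₂ ↔
      ∃ (f : Module.End Rᵐᵒᵖ M) (a : R), f * f = f ∧ a * a = a ∧
        {x : M | ∃ r : R, x = op r • m₁} ⊆ Set.range f ∧
        {x : M | ∃ g : Module.End Rᵐᵒᵖ M, x = g m₁} ⊆ {x : M | ∃ y : M, x = op a • y} ∧
        f m₁ = f m₂ ∧ op a • m₁ = op a • m₂ := by
  constructor
  · rintro ⟨φ, h1, h2, h3⟩
    refine ⟨⟨⟨fun x => op (φ x) • m₁, ?_⟩, ?_⟩, φ m₁, ?_, ?_, ?_, ?_, ?_, ?_⟩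
    · intro x y
      simp only [map_add, op_add, add_smul]
    · intro r x
      simp only [map_smul, RingHom.id_apply]
      obtain ⟨s, rfl⟩ : ∃ s, op s = r := ⟨r.unop, rfl⟩
      rw [op_smul_eq_mul, op_mul, mul_smul]
    · ext x
      show op (φ (op (φ x) • m₁)) • m₁ = op (φ x) • m₁
      rw [map_smul, op_smul_eq_mul, op_mul, mul_smul, ← h1]
    · conv_rhs => rw [h1]
      rw [map_smul, op_smul_eq_mul]
    · rintro x ⟨r, rfl⟩
      refine ⟨op r • m₁, ?_⟩
      show op (φ (op r • m₁)) • m₁ = op r • m₁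
      rw [map_smul, op_smul_eq_mul, op_mul, mul_smul, ← h1]
    · rintro x ⟨g, rfl⟩
      refine ⟨g m₁, ?_⟩
      conv_lhs => rw [h1]
      rw [map_smul]
    · show op (φ m₁) • m₁ = op (φ m₂) • m₁
      rw [h3]
    · exact h2 m₁
  · rintro ⟨f, a, hf, ha, hfm, hsa, hfeq, haeq⟩
    obtain ⟨ψ, hψ⟩ := hM m₁
    have hm1f : f m₁ = m₁ := by
      obtain ⟨y, hy⟩ := hfm ⟨ψ m₁, hψ⟩
      rw [← hy, ← Module.End.mul_apply, hf]
    have hm1a : op a • m₁ = m₁ := by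
      obtain ⟨y, hy⟩ := hsa ⟨1, rfl⟩
      have hy' : m₁ = op a • y := hy
      rw [hy', ← mul_smul, ← op_mul, ha, ← hy']
    refine ⟨⟨⟨fun x => a * ψ (f x), ?_⟩, ?_⟩, ?_, ?_, ?_⟩
    · intro x y
      simp only [map_add, mul_add]
    · intro r x
      simp only [map_smul, RingHom.id_apply]
      obtain ⟨s, rfl⟩ : ∃ s, op s = r := ⟨r.unop, rfl⟩
      rw [op_smul_eq_mul, op_smul_eq_mul, mul_assoc]
    · show m₁ = op (a * ψ (f m₁)) • m₁
      rw [hm1f, op_mul, mul_smul, hm1a, ← hψ]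
    · intro x
      show op (a * ψ (f x)) • m₁ = op (a * ψ (f x)) • m₂
      rw [op_mul, mul_smul, mul_smul, haeq]
    · show a * ψ (f m₁) = a * ψ (f m₂)
      rw [hfeq]
end

section
/- Let M be a right R-module and m1, m2 ∈ M with m1 ≤⁻ m2. Then there exist an idempotent f ∈ S and an idempotent a ∈ R such that m1 = f(m1) = f(m2) = m1·a = m2·a. -/
/- A right `R`-module is encoded as a left `Rᵐᵒᵖ`-module: `m · r = MulOpposite.op r • m`.
Likewise `R` itself is a right `R`-module via `op r • a = a * r`, so the dual
`M* = Hom_R(M, R)` is `M →ₗ[Rᵐᵒᵖ] R` and `S = End_R(M)` is `Module.End Rᵐᵒᵖ M`. -/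

open MulOpposite

/-- If `m₁ ≤⁻ m₂`, then there exist idempotents `f ∈ S` and `a ∈ R`
such that `m₁ = f(m₁) = f(m₂) = m₁·a = m₂·a`. -/
theorem minusLE_exists_idempotents_eq (R : Type*) [Ring R] {M : Type*} [AddCommGroup M]
    [Module Rᵐᵒᵖ M] (m₁ m₂ : M) (h : MinusLE R m₁ m₂) :
    ∃ (f : Module.End Rᵐᵒᵖ M) (a : R), f * f = f ∧ a * a = a ∧
      m₁ = f m₁ ∧ f m₁ = f m₂ ∧ f m₂ = op a • m₁ ∧ op a • m₁ = op a • m₂ := by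
  obtain ⟨φ, h1, h2, h3⟩ := h
  set f : Module.End Rᵐᵒᵖ M :=
    { toFun := fun x => op (φ x) • m₁
      map_add' := fun x y => by simp only [map_add, op_add, add_smul]
      map_smul' := fun r x => by
        simp only [map_smul, RingHom.id_apply]
        rw [← op_unop r, op_smul_eq_mul, op_mul, mul_smul] } with hf
  have hfx : ∀ x, f x = op (φ x) • m₁ := fun x => rfl
  have ha : φ m₁ = φ m₁ * φ m₁ := by
    conv_lhs => rw [h1]
    rw [map_smul, op_smul_eq_mul]
  refine ⟨f, φ m₁, ?_, ha.symm, h1, ?_, ?_, h2 m₁⟩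
  · ext x
    show f (f x) = f x
    rw [hfx, hfx x, map_smul, op_smul_eq_mul, op_mul, mul_smul, ← h1]
  · rw [hfx, hfx, h3]
  · rw [hfx, h3]
end

section
/- Let M be a regular right R-module and m1, m2 ∈ M. Then m1 ≤_J m2 (i.e., there exist an idempotent f ∈ S and an idempotent a ∈ R with m1 = f(m2) = m2·a) if and only if m1 ≤⁻ m2. -/
/- A right `R`-module is encoded as a left `Rᵐᵒᵖ`-module: `m · r = MulOpposite.op r • m`.
Likewise `R` itself is a right `R`-module via `op r • a = a * r`, so the dual
`M* = Hom_R(M, R)` is `M →ₗ[Rᵐᵒᵖ] R` and `S = End_R(M)` is `Module.End Rᵐᵒᵖ M`. -/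

open MulOpposite

/-- The Jones relation: `m₁ ≤_J m₂` iff there exist idempotents `f ∈ S` and `a ∈ R`
such that `m₁ = f(m₂) = m₂·a`. -/
def JonesLE (R : Type*) [Ring R] {M : Type*} [AddCommGroup M] [Module Rᵐᵒᵖ M]
    (m₁ m₂ : M) : Prop :=
  ∃ (f : Module.End Rᵐᵒᵖ M) (a : R), f * f = f ∧ a * a = a ∧
    m₁ = f m₂ ∧ m₁ = op a • m₂

/-- On a regular module, `m₁ ≤_J m₂` iff `m₁ ≤⁻ m₂`. -/
theorem jonesLE_iff_minusLE (R : Type*) [Ring R] {M : Type*} [AddCommGroup M]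
    [Module Rᵐᵒᵖ M] (hM : ∀ m : M, IsRegularElem R m) (m₁ m₂ : M) :
    JonesLE R m₁ m₂ ↔ MinusLE R m₁ m₂ := by
  constructor
  · rintro ⟨f, a, hf, ha, h1, h2⟩
    obtain ⟨ψ, hψ⟩ := hM m₁
    have ham₁ : op a • m₁ = m₁ := by
      rw [h2, smul_smul, ← op_mul, ha]
    have hfm₁ : f m₁ = m₁ := by
      conv_lhs => rw [h1, ← Module.End.mul_apply, hf]
      exact h1.symm
    refine ⟨{ toFun := fun x => a * ψ (f x),
              map_add' := by intro x y; simp [mul_add]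
              map_smul' := by
                intro r x
                simp [MulOpposite.smul_eq_mul_unop, mul_assoc] }, ?_, ?_, ?_⟩
    · show m₁ = op (a * ψ (f m₁)) • m₁
      rw [hfm₁, op_mul, mul_smul, ham₁]
      exact hψ
    · intro x
      show op (a * ψ (f x)) • m₁ = op (a * ψ (f x)) • m₂
      have : op a • m₁ = op a • m₂ := by rw [ham₁, h2]
      rw [op_mul, mul_smul, mul_smul, this]
    · show a * ψ (f m₁) = a * ψ (f m₂)
      rw [hfm₁, ← h1]
  · rintro ⟨φ, h1, h2, h3⟩
    refine ⟨{ toFun := fun x => op (φ x) • m₁,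
              map_add' := by intro x y; simp [add_smul]
              map_smul' := by
                intro r x
                simp only [map_smul, RingHom.id_apply]
                rw [MulOpposite.smul_eq_mul_unop, op_mul, mul_smul, op_unop] }, φ m₁, ?_, ?_, ?_, ?_⟩
    · ext x
      show op (φ (op (φ x) • m₁)) • m₁ = op (φ x) • m₁
      rw [map_smul, MulOpposite.smul_eq_mul_unop, unop_op, op_mul, mul_smul, ← h1]
    · have := congrArg φ h1
      rw [map_smul, MulOpposite.smul_eq_mul_unop, unop_op] at this
      exact this.symm
    · show m₁ = op (φ m₂) • m₁
      rw [← h3, ← h1]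
    · rw [← h2 m₁, ← h1]
end

section
/- Let M be a regular right R-module and m1, m2 ∈ M. Then m1 ≤⁻ m2 if and only if m1 ≤_M m2 (i.e., there exist f ∈ S and a ∈ R with m1 = m2·a = f(m2) and m1 = f(m1)). -/
/- A right `R`-module is encoded as a left `Rᵐᵒᵖ`-module: `m · r = MulOpposite.op r • m`.
Likewise `R` itself is a right `R`-module via `op r • a = a * r`, so the dual
`M* = Hom_R(M, R)` is `M →ₗ[Rᵐᵒᵖ] R` and `S = End_R(M)` is `Module.End Rᵐᵒᵖ M`. -/

open MulOpposite

/-- The Mitsch relation: `m₁ ≤_M m₂` iff there exist `f ∈ S` and `a ∈ R` such that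
`m₁ = m₂·a = f(m₂)` and `m₁ = f(m₁)`. -/
def MitschLE (R : Type*) [Ring R] {M : Type*} [AddCommGroup M] [Module Rᵐᵒᵖ M]
    (m₁ m₂ : M) : Prop :=
  ∃ (f : Module.End Rᵐᵒᵖ M) (a : R),
    m₁ = op a • m₂ ∧ m₁ = f m₂ ∧ m₁ = f m₁

/-- On a regular module, `m₁ ≤⁻ m₂` iff `m₁ ≤_M m₂`. -/
theorem minusLE_iff_mitschLE (R : Type*) [Ring R] {M : Type*} [AddCommGroup M]
    [Module Rᵐᵒᵖ M] (hM : ∀ m : M, IsRegularElem R m) (m₁ m₂ : M) :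
    MinusLE R m₁ m₂ ↔ MitschLE R m₁ m₂ := by
  constructor
  · rintro ⟨φ, h1, h2, h3⟩
    refine ⟨⟨⟨fun x => op (φ x) • m₁, ?_⟩, ?_⟩, φ m₁, ?_, ?_, ?_⟩
    · intro x y
      simp [add_smul]
    · intro c x
      simp only
      rw [map_smul]
      induction c using MulOpposite.rec' with
      | h c =>
        rw [MulOpposite.smul_eq_mul_unop]
        simp [MulOpposite.op_mul, mul_smul]
    · rw [← h2 m₁, ← h1]
    · simp only [LinearMap.coe_mk, AddHom.coe_mk]
      rw [← h3, ← h1]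
    · simp only [LinearMap.coe_mk, AddHom.coe_mk]
      exact h1
  · rintro ⟨f, a, ha, hf2, hf1⟩
    obtain ⟨ψ, hψ⟩ := hM m₁
    -- m₁ · a = m₁ :
    have hma : op a • m₁ = m₁ := by
      have h := map_smul f (op a) m₂
      rw [← ha, ← hf2, ← hf1] at h
      exact h.symm
    set e := ψ m₁ with he
    refine ⟨⟨⟨fun x => a * e * ψ (f x), ?_⟩, ?_⟩, ?_, ?_, ?_⟩
    · intro x y
      simp [mul_add]
    · intro c x
      simp only
      rw [map_smul, map_smul]
      induction c using MulOpposite.rec' with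
      | h c =>
        simp [MulOpposite.smul_eq_mul_unop, mul_assoc]
    · -- m₁ = m₁ · φ(m₁)
      simp only [LinearMap.coe_mk, AddHom.coe_mk]
      rw [← hf1, ← he]
      rw [op_mul, op_mul, mul_smul, mul_smul, hma, ← hψ, ← hψ]
    · -- ∀ x, m₁ · φ(x) = m₂ · φ(x)
      intro x
      simp only [LinearMap.coe_mk, AddHom.coe_mk]
      have key : op (a * e) • m₁ = op (a * e) • m₂ := by
        rw [MulOpposite.op_mul, mul_smul, mul_smul, ← ha, hma, ← hψ]
      rw [MulOpposite.op_mul, mul_smul, mul_smul, key]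
    · -- φ(m₁) = φ(m₂)
      simp only [LinearMap.coe_mk, AddHom.coe_mk]
      rw [← hf1, ← hf2]
end

section
/- Let M be a regular right R-module and m1, m2 ∈ M. Then m1 ≤⁻ m2 if and only if there exist g ∈ S and b ∈ R such that m1 = m2·b = g(m2) and m1 = m1·b. -/
/- A right `R`-module is encoded as a left `Rᵐᵒᵖ`-module: `m · r = MulOpposite.op r • m`.
Likewise `R` itself is a right `R`-module via `op r • a = a * r`, so the dual
`M* = Hom_R(M, R)` is `M →ₗ[Rᵐᵒᵖ] R` and `S = End_R(M)` is `Module.End Rᵐᵒᵖ M`. -/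

open MulOpposite

/-- On a regular module, `m₁ ≤⁻ m₂` iff there exist `g ∈ S` and
`b ∈ R` such that `m₁ = m₂·b = g(m₂)` and `m₁ = m₁·b`. -/
theorem minusLE_iff_exists_right_fixed (R : Type*) [Ring R] {M : Type*}
    [AddCommGroup M] [Module Rᵐᵒᵖ M] (hM : ∀ m : M, IsRegularElem R m) (m₁ m₂ : M) :
    MinusLE R m₁ m₂ ↔
      ∃ (g : Module.End Rᵐᵒᵖ M) (b : R),
        m₁ = op b • m₂ ∧ m₁ = g m₂ ∧ m₁ = op b • m₁ := by

  constructor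
  · rintro ⟨φ, h1, h2, h3⟩
    refine ⟨{ toFun := fun x => op (φ x) • m₁,
              map_add' := fun x y => by simp [add_smul]
              map_smul' := fun r x => by
                simp only [map_smul, RingHom.id_apply,
                  MulOpposite.smul_eq_mul_unop, op_mul, op_unop, mul_smul] }, φ m₁, ?_, ?_, ?_⟩
    · rw [← h2 m₁, ← h1]
    · show m₁ = op (φ m₂) • m₁
      rw [← h3]; exact h1
    · exact h1
  · rintro ⟨g, b, hb, hg, hfix⟩
    obtain ⟨ψ, hψ⟩ := hM m₁
    have hgm1 : g m₁ = m₁ := by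
      rw [hb, map_smul, ← hg, ← hb, ← hfix]
    refine ⟨{ toFun := fun x => b * ψ (g x),
              map_add' := fun x y => by simp [mul_add]
              map_smul' := fun r x => by
                simp only [map_smul, RingHom.id_apply,
                  MulOpposite.smul_eq_mul_unop, mul_assoc] }, ?_, ?_, ?_⟩
    · show m₁ = op (b * ψ (g m₁)) • m₁
      rw [hgm1, op_mul, mul_smul, ← hfix]; exact hψ
    · intro x
      show op (b * ψ (g x)) • m₁ = op (b * ψ (g x)) • m₂
      rw [op_mul, mul_smul, mul_smul, ← hfix, ← hb]
    · show b * ψ (g m₁) = b * ψ (g m₂)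
      rw [hgm1, ← hg]
end

section
/- Let M be a right R-module and m1, m2 ∈ M with both m1 and m2 regular. Then m1 ≤⁻ m2 if and only if m2R = m1R ⊕ (m2 − m1)R, i.e., m2R = m1R + (m2 − m1)R and m1R ∩ (m2 − m1)R = {0}. -/
/- A right `R`-module is encoded as a left `Rᵐᵒᵖ`-module: `m · r = MulOpposite.op r • m`.
Likewise `R` itself is a right `R`-module via `op r • a = a * r`, so the dual
`M* = Hom_R(M, R)` is `M →ₗ[Rᵐᵒᵖ] R` and `S = End_R(M)` is `Module.End Rᵐᵒᵖ M`. -/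

open MulOpposite

/-- For regular elements `m₁, m₂` of a right `R`-module `M`,
`m₁ ≤⁻ m₂` iff `m₂R = m₁R ⊕ (m₂ - m₁)R`, i.e. `m₂R = m₁R + (m₂ - m₁)R` and
`m₁R ∩ (m₂ - m₁)R = {0}`. -/
theorem minusLE_iff_directSum (R : Type*) [Ring R] {M : Type*} [AddCommGroup M]
    [Module Rᵐᵒᵖ M] (m₁ m₂ : M)
    (h₁ : IsRegularElem R m₁) (h₂ : IsRegularElem R m₂) :
    MinusLE R m₁ m₂ ↔
      (Submodule.span Rᵐᵒᵖ {m₂} =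
        Submodule.span Rᵐᵒᵖ {m₁} ⊔ Submodule.span Rᵐᵒᵖ {m₂ - m₁} ∧
       Submodule.span Rᵐᵒᵖ {m₁} ⊓ Submodule.span Rᵐᵒᵖ {m₂ - m₁} = ⊥) := by
  constructor
  · rintro ⟨φ, hφ1, hφ2, hφ3⟩
    have hm1 : m₁ = op (φ m₁) • m₂ := hφ1.trans (hφ2 m₁)
    constructor
    · apply le_antisymm
      · rw [Submodule.span_le, Set.singleton_subset_iff]
        have hmem := Submodule.add_mem
          (Submodule.span Rᵐᵒᵖ {m₁} ⊔ Submodule.span Rᵐᵒᵖ {m₂ - m₁})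
          (Submodule.mem_sup_left (Submodule.mem_span_singleton_self m₁))
          (Submodule.mem_sup_right (Submodule.mem_span_singleton_self (m₂ - m₁)))
        have he : m₁ + (m₂ - m₁) = m₂ := by abel
        rwa [he] at hmem
      · apply sup_le <;> rw [Submodule.span_le, Set.singleton_subset_iff]
        · exact Submodule.mem_span_singleton.mpr ⟨op (φ m₁), hm1.symm⟩
        · exact Submodule.sub_mem _ (Submodule.mem_span_singleton_self m₂)
            (Submodule.mem_span_singleton.mpr ⟨op (φ m₁), hm1.symm⟩)
    · rw [eq_bot_iff]
      rintro v ⟨hv1, hv2⟩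
      obtain ⟨r, hr⟩ := Submodule.mem_span_singleton.mp hv1
      obtain ⟨s, hs⟩ := Submodule.mem_span_singleton.mp hv2
      have hφv : φ v = 0 := by
        rw [← hs, map_smul, map_sub, ← hφ3, sub_self, smul_zero]
      have hveq : v = op (φ v) • m₁ := by
        rw [← hr, map_smul]
        have : op (r • φ m₁) = r * op (φ m₁) := by
          rw [← op_unop r, op_smul_eq_mul, op_mul, op_unop]
        rw [this, mul_smul, ← hφ1]
      rw [Submodule.mem_bot, hveq, hφv, op_zero, zero_smul]
  · rintro ⟨hsup, hinf⟩
    obtain ⟨ψ, hψ⟩ := h₁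
    obtain ⟨χ, hχ⟩ := h₂
    -- m₁ ∈ m₂R
    have hm1mem : m₁ ∈ Submodule.span Rᵐᵒᵖ {m₂} := by
      rw [hsup]
      exact Submodule.mem_sup_left (Submodule.mem_span_singleton_self m₁)
    obtain ⟨a, ha⟩ := Submodule.mem_span_singleton.mp hm1mem
    -- a • m₁ = m₁ and a • (m₂ - m₁) = 0
    have hkey : m₁ - a • m₁ = a • (m₂ - m₁) := by rw [smul_sub, ha]
    have hmem0 : m₁ - a • m₁ ∈
        Submodule.span Rᵐᵒᵖ {m₁} ⊓ Submodule.span Rᵐᵒᵖ {m₂ - m₁} := by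
      refine ⟨Submodule.sub_mem _ (Submodule.mem_span_singleton_self m₁)
        (Submodule.smul_mem _ _ (Submodule.mem_span_singleton_self m₁)), ?_⟩
      rw [hkey]
      exact Submodule.smul_mem _ _ (Submodule.mem_span_singleton_self _)
    rw [hinf, Submodule.mem_bot, sub_eq_zero] at hmem0
    have ham1 : a • m₁ = m₁ := hmem0.symm
    have haz : a • (m₂ - m₁) = 0 := by rw [← hkey, ham1, sub_self]
    -- the projection onto m₂R coming from regularity of m₂
    set p : M →ₗ[Rᵐᵒᵖ] M :=
      { toFun := fun x => op (χ x) • m₂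
        map_add' := by intro x y; simp only [map_add, op_add, add_smul]
        map_smul' := by
          intro r x
          simp only [map_smul, RingHom.id_apply]
          rw [← op_unop r, op_smul_eq_mul, op_mul, op_unop, mul_smul]
      } with hp
    have hpspan : ∀ x ∈ Submodule.span Rᵐᵒᵖ {m₂}, p x = x := by
      intro x hx
      obtain ⟨c, rfl⟩ := Submodule.mem_span_singleton.mp hx
      rw [map_smul]
      show c • (op (χ m₂) • m₂) = c • m₂
      rw [← hχ]
    have hm21mem : m₂ - m₁ ∈ Submodule.span Rᵐᵒᵖ {m₂} :=
      Submodule.sub_mem _ (Submodule.mem_span_singleton_self m₂) hm1mem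
    set N : Submodule Rᵐᵒᵖ M := Submodule.span Rᵐᵒᵖ {m₂ - m₁} ⊔ LinearMap.ker p with hN
    have hcompl : IsCompl (Submodule.span Rᵐᵒᵖ {m₁}) N := by
      constructor
      · rw [disjoint_iff_inf_le]
        rintro x ⟨hx1, hxN⟩
        obtain ⟨w, hw, k, hk, hwk⟩ := Submodule.mem_sup.mp hxN
        have hpx : p x = x := hpspan x
          ((Submodule.span_le.mpr (by rintro y rfl; exact hm1mem)) hx1)
        have hpw : p w = w := hpspan w
          ((Submodule.span_le.mpr (by rintro y rfl; exact hm21mem)) hw)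
        have hpk : p k = 0 := hk
        have hxw : x = w := by
          rw [← hpx, ← hwk, map_add, hpw, hpk, add_zero]
        have : x ∈ Submodule.span Rᵐᵒᵖ {m₁} ⊓ Submodule.span Rᵐᵒᵖ {m₂ - m₁} :=
          ⟨hx1, hxw ▸ hw⟩
        rw [hinf] at this
        exact this
      · rw [codisjoint_iff, eq_top_iff]
        intro x _
        have hx : x = p x + (x - p x) := by abel
        have hp1 : p x ∈ Submodule.span Rᵐᵒᵖ {m₂} :=
          Submodule.smul_mem _ _ (Submodule.mem_span_singleton_self m₂)
        have hp2 : x - p x ∈ LinearMap.ker p := by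
          rw [LinearMap.mem_ker, map_sub, hpspan (p x) hp1, sub_self]
        rw [hsup] at hp1
        rcases Submodule.mem_sup.mp hp1 with ⟨u, hu, w, hw, huw⟩
        have hmemb : u + w + (x - p x) ∈ Submodule.span Rᵐᵒᵖ {m₁} ⊔ N :=
          Submodule.add_mem _
            (Submodule.add_mem _ (Submodule.mem_sup_left hu)
              (Submodule.mem_sup_right (Submodule.mem_sup_left hw)))
            (Submodule.mem_sup_right (Submodule.mem_sup_right hp2))
        have he : u + w + (x - p x) = x := by rw [huw]; abel
        rwa [he] at hmemb
    -- projection of M onto m₁R killing (m₂ - m₁)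
    set f : M →ₗ[Rᵐᵒᵖ] M :=
      (Submodule.span Rᵐᵒᵖ {m₁}).subtype ∘ₗ
        Submodule.projectionOnto _ _ hcompl with hf
    have hfm1 : f m₁ = m₁ := by
      have := Submodule.projectionOnto_apply_left hcompl
        ⟨m₁, Submodule.mem_span_singleton_self m₁⟩
      simp only [hf, LinearMap.comp_apply, Submodule.subtype_apply]
      rw [this]
    have hfm21 : f (m₂ - m₁) = 0 := by
      have := Submodule.projectionOnto_apply_of_mem_right hcompl (x := m₂ - m₁)
        (Submodule.mem_sup_left (Submodule.mem_span_singleton_self _))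
      simp only [hf, LinearMap.comp_apply, Submodule.subtype_apply]
      rw [this, Submodule.coe_zero]
    have hfm2 : f m₂ = m₁ := by
      have : m₂ = m₁ + (m₂ - m₁) := by abel
      rw [this, map_add, hfm1, hfm21, add_zero]
    -- the witnessing functional
    refine ⟨{ toFun := fun x => unop a * ψ (f x)
              map_add' := by intro x y; simp only [map_add, mul_add]
              map_smul' := by
                intro r x
                simp only [map_smul, RingHom.id_apply]
                rw [← op_unop r, op_smul_eq_mul, op_smul_eq_mul, mul_assoc]
            }, ?_, ?_, ?_⟩
    · show m₁ = op (unop a * ψ (f m₁)) • m₁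
      rw [hfm1, op_mul, op_unop, mul_smul, ham1, ← hψ]
    · intro x
      show op (unop a * ψ (f x)) • m₁ = op (unop a * ψ (f x)) • m₂
      rw [op_mul, op_unop, mul_smul, mul_smul, ham1, ha]
    · show unop a * ψ (f m₁) = unop a * ψ (f m₂)
      rw [hfm1, hfm2]
end
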